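/- Let τ_1, …, τ_n be Hermitian unital linear functionals on ℂ⟨x_1⟩, …, ℂ⟨x_n⟩ respectively, let 1 ≤ n′ < n, and let h₁ be a self-adjoint element of ℂ⟨x_1, …, x_{n′}⟩ and h₂ a self-adjoint element of ℂ⟨x_{n′+1}, …, x_n⟩. Then π_{orb,R}(h₁ + h₂ : (τ_i)_{i=1}^n) ≤ π_{orb,R}(h₁ : (τ_i)_{i=1}^{n′}) + π_{orb,R}(h₂ : (τ_i)_{i=n′+1}^n), where the two right-hand pressures are the orbital free pressures of the sub-systems of variables x_1, …, x_{n′} and x_{n′+1}, …, x_n respectively, with the same cut-off R (conventions: (−∞) + a = −∞). -/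

import Mathlib

/-!
Orbital free pressure and its Legendre transform (Hiai–Ueda).

Common infrastructure: the free unital complex *-algebra on self-adjoint generators,
matrix microstate sets, the orbital free pressure, the orbital η-entropy, the orbital
free entropy; Lebesgue measure on self-adjoint matrices, the free pressure, free
entropy and η-entropy; Gibbs (micro-)ensembles.

The Haar probability measures `γ_{U(N)}` on the unitary groups are formalized as a
family of left-invariant Borel probability measures (which uniquely determines them).
-/

open MeasureTheory Filter Topology
open scoped BigOperators ENNReal TensorProduct ComplexOrder

noncomputable section

namespace OrbFP

/-- The algebra of `N × N` complex matrices. -/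
abbrev Mat (N : ℕ) := Matrix (Fin N) (Fin N) ℂ

/-- The normalized trace `tr_N`. -/
def trN (N : ℕ) (A : Mat N) : ℂ := A.trace / (N : ℂ)

/-- The (ℓ²-)operator norm of a matrix. -/
def opNorm {N : ℕ} (A : Mat N) : ℝ := ‖Matrix.toEuclideanCLM (𝕜 := ℂ) A‖

/-- The unitary group `U(N)`. -/
abbrev UN (N : ℕ) := Matrix.unitaryGroup (Fin N) ℂ

instance (N : ℕ) : MeasurableSpace (UN N) := borel _
instance (N : ℕ) : BorelSpace (UN N) := ⟨rfl⟩
instance (N : ℕ) : MeasurableSpace (Mat N) := borel _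
instance (N : ℕ) : BorelSpace (Mat N) := ⟨rfl⟩

/-- The free unital complex *-algebra on self-adjoint generators indexed by `X`. -/
abbrev FAlg (X : Type) := FreeAlgebra ℂ X

/-- Coefficient-wise complex conjugation on the free algebra. -/
def conjCoeff {X : Type} (p : FAlg X) : FAlg X :=
  (FreeAlgebra.equivMonoidAlgebraFreeMonoid (R := ℂ) (X := X)).symm
    (MonoidAlgebra.coeffEquiv.symm (Finsupp.mapRange (starRingEnd ℂ) (map_zero _)
      (MonoidAlgebra.coeffEquiv (FreeAlgebra.equivMonoidAlgebraFreeMonoid (R := ℂ) (X := X) p))))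

/-- The star operation of the free complex *-algebra with self-adjoint generators:
reverse words (the `star` of `FreeAlgebra`) and conjugate the coefficients. -/
def fstar {X : Type} (p : FAlg X) : FAlg X := star (conjCoeff p)

/-- Self-adjointness in the free complex *-algebra. -/
def IsSA {X : Type} (p : FAlg X) : Prop := fstar p = p

/-- A Hermitian unital linear functional. -/
def IsHermState {X : Type} (τ : FAlg X →ₗ[ℂ] ℂ) : Prop :=
  τ 1 = 1 ∧ ∀ p, τ (fstar p) = starRingEnd ℂ (τ p)

/-- Ordered product of a word of matrices. -/
def wordMat {N : ℕ} {κ : Type} (A : κ → Mat N) (w : List κ) : Mat N := (w.map A).prod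

/-- Ordered product of a word of generators in the free algebra. -/
def wordAlg {κ : Type} (w : List κ) : FAlg κ := (w.map (FreeAlgebra.ι ℂ)).prod

/-- The microstate set `Γ_R(τ; N, m, δ)` of a functional on the free algebra on `κ`:
tuples of self-adjoint matrices of operator norm at most `R` whose normalized trace of
every word of length `1 ≤ l ≤ m` is `δ`-close to the corresponding moment of `τ`. -/
def microSet {κ : Type} (R : ℝ) (τ : FAlg κ →ₗ[ℂ] ℂ) (N m : ℕ) (δ : ℝ) :
    Set (κ → Mat N) :=
  {A | (∀ j, (A j).IsHermitian ∧ opNorm (A j) ≤ R) ∧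
    ∀ w : List κ, w ≠ [] → w.length ≤ m →
      ‖trN N (wordMat A w) - τ (wordAlg w)‖ < δ}

/-- `τ` has finite-dimensional approximants. -/
def HasFDA {κ : Type} (R : ℝ) (τ : FAlg κ →ₗ[ℂ] ℂ) : Prop :=
  ∀ (m : ℕ) (δ : ℝ), 0 < δ → ∃ N, (microSet R τ N m δ).Nonempty

variable {ι : Type} [Fintype ι]

/-- The index of the generators `x_{ij}`, `i ∈ ι`, `1 ≤ j ≤ r i`. -/
abbrev gen (r : ι → ℕ) := Σ i : ι, Fin (r i)

/-- Evaluation of the full free algebra at a family of matrix tuples. -/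
def evalA {r : ι → ℕ} {N : ℕ} (A : ∀ i, Fin (r i) → Mat N) :
    FAlg (gen r) →ₐ[ℂ] Mat N :=
  FreeAlgebra.lift ℂ fun p : gen r => A p.1 p.2

/-- The canonical embedding `ℂ⟨x_i⟩ → ℂ⟨x⟩`. -/
def inclAlg (r : ι → ℕ) (i : ι) : FAlg (Fin (r i)) →ₐ[ℂ] FAlg (gen r) :=
  FreeAlgebra.lift ℂ fun j => FreeAlgebra.ι ℂ (⟨i, j⟩ : gen r)

/-- The restriction of a functional on `ℂ⟨x⟩` to `ℂ⟨x_i⟩`. -/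
def restr {r : ι → ℕ} (τ : FAlg (gen r) →ₗ[ℂ] ℂ) (i : ι) :
    FAlg (Fin (r i)) →ₗ[ℂ] ℂ :=
  τ ∘ₗ (inclAlg r i).toLinearMap

/-- The embedding of the free algebra of a sub-system of the variables. -/
def inclSub {r : ι → ℕ} (P : ι → Prop) :
    FAlg (gen fun i : Subtype P => r i.1) →ₐ[ℂ] FAlg (gen r) :=
  FreeAlgebra.lift ℂ fun p => FreeAlgebra.ι ℂ (⟨p.1.1, p.2⟩ : gen r)

/-- Restriction of a functional to a sub-system of the variables. -/
def restrSub {r : ι → ℕ} (P : ι → Prop) (τ : FAlg (gen r) →ₗ[ℂ] ℂ) :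
    FAlg (gen fun i : Subtype P => r i.1) →ₗ[ℂ] ℂ :=
  τ ∘ₗ (inclSub P).toLinearMap

/-- The conjugated family `(V_i A_i V_i^*)_i`. -/
def conjFam {r : ι → ℕ} {N : ℕ} (V : ι → UN N) (A : ∀ i, Fin (r i) → Mat N) :
    ∀ i, Fin (r i) → Mat N :=
  fun i j => (V i : Mat N) * A i j * star (V i : Mat N)

/-- The Gibbs weight `exp(-N² tr_N(h((V_i A_i V_i^*)_i)))`. -/
def gibbsWt {r : ι → ℕ} {N : ℕ} (h : FAlg (gen r)) (A : ∀ i, Fin (r i) → Mat N)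
    (V : ι → UN N) : ℝ :=
  Real.exp (-(N : ℝ) ^ 2 * (trN N (evalA (conjFam V A) h)).re)

/-- The product `∏_i Γ_R(τ_i; N, m, δ)` of the microstate sets. -/
def microProd (R : ℝ) {r : ι → ℕ} (τs : ∀ i, FAlg (Fin (r i)) →ₗ[ℂ] ℂ)
    (N m : ℕ) (δ : ℝ) : Set (∀ i, Fin (r i) → Mat N) :=
  {A | ∀ i, A i ∈ microSet R (τs i) N m δ}

/-- The finite-`N` orbital free pressure `π_{orb,R}(h : (τ_i); N, m, δ)`
(`-∞` when some microstate set is empty). -/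
def piOrbN (γ : ∀ N, Measure (UN N)) (R : ℝ) {r : ι → ℕ} (h : FAlg (gen r))
    (τs : ∀ i, FAlg (Fin (r i)) →ₗ[ℂ] ℂ) (N m : ℕ) (δ : ℝ) : EReal :=
  ⨆ A ∈ microProd R τs N m δ,
    ((Real.log (∫ V : ι → UN N, gibbsWt h A V ∂(Measure.pi fun _ => γ N)) : ℝ) : EReal)

/-- The orbital free pressure `π_{orb,R}(h : (τ_i))`. -/
def piOrb (γ : ∀ N, Measure (UN N)) (R : ℝ) {r : ι → ℕ} (h : FAlg (gen r))
    (τs : ∀ i, FAlg (Fin (r i)) →ₗ[ℂ] ℂ) : EReal :=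
  ⨅ (m : ℕ) (δ : ℝ) (_ : 0 < δ),
    Filter.limsup
      (fun N : ℕ => ((((N : ℝ) ^ 2)⁻¹ : ℝ) : EReal) * piOrbN γ R h τs N m δ)
      Filter.atTop

/-- The "universal" `R`-norm `‖h‖_R`: the supremum of the operator norms of all
evaluations of `h` at families of self-adjoint matrices of norm at most `R`. -/
def normR (R : ℝ) {r : ι → ℕ} (h : FAlg (gen r)) : ℝ :=
  sSup {t : ℝ | ∃ (N : ℕ) (A : ∀ i, Fin (r i) → Mat N),
    (∀ i j, (A i j).IsHermitian ∧ opNorm (A i j) ≤ R) ∧ t = opNorm (evalA A h)}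

/-- The minus Legendre transform `inf_h (φ(h) + π_{orb,R}(h : (τ_i)))` of the orbital
free pressure, relative to `(τ_i)`. -/
def etaOrbRel (γ : ∀ N, Measure (UN N)) (R : ℝ) {r : ι → ℕ}
    (τ : FAlg (gen r) →ₗ[ℂ] ℂ) (τs : ∀ i, FAlg (Fin (r i)) →ₗ[ℂ] ℂ) : EReal :=
  ⨅ (h : FAlg (gen r)) (_ : IsSA h),
    (((τ h).re : ℝ) : EReal) + piOrb γ R h τs

/-- The orbital `η`-entropy `η_{orb,R}(τ)`. -/
def etaOrb (γ : ∀ N, Measure (UN N)) (R : ℝ) {r : ι → ℕ}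
    (τ : FAlg (gen r) →ₗ[ℂ] ℂ) : EReal :=
  etaOrbRel γ R τ (restr τ)

/-- The microstate set `Γ_R(τ; N, m, δ)` of a functional on the full free algebra. -/
def microFull (R : ℝ) {r : ι → ℕ} (τ : FAlg (gen r) →ₗ[ℂ] ℂ) (N m : ℕ) (δ : ℝ) :
    Set (∀ i, Fin (r i) → Mat N) :=
  {A | (∀ i j, (A i j).IsHermitian ∧ opNorm (A i j) ≤ R) ∧
    ∀ w : List (gen r), w ≠ [] → w.length ≤ m →
      ‖trN N (wordMat (fun p : gen r => A p.1 p.2) w) - τ (wordAlg w)‖ < δ}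

/-- `τ` (on the full algebra) has finite-dimensional approximants. -/
def HasFDAFull (R : ℝ) {r : ι → ℕ} (τ : FAlg (gen r) →ₗ[ℂ] ℂ) : Prop :=
  ∀ (m : ℕ) (δ : ℝ), 0 < δ → ∃ N, (microFull R τ N m δ).Nonempty

/-- The orbital microstate set `Γ_orb(τ : (A_i); N, m, δ)`. -/
def orbSet (R : ℝ) {r : ι → ℕ} (τ : FAlg (gen r) →ₗ[ℂ] ℂ) {N : ℕ}
    (A : ∀ i, Fin (r i) → Mat N) (m : ℕ) (δ : ℝ) : Set (ι → UN N) :=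
  {V | conjFam V A ∈ microFull R τ N m δ}

/-- The orbital free entropy `χ_{orb,R}(τ)`. -/
def chiOrb (γ : ∀ N, Measure (UN N)) (R : ℝ) {r : ι → ℕ}
    (τ : FAlg (gen r) →ₗ[ℂ] ℂ) : EReal :=
  ⨅ (m : ℕ) (δ : ℝ) (_ : 0 < δ),
    Filter.limsup
      (fun N : ℕ => ((((N : ℝ) ^ 2)⁻¹ : ℝ) : EReal) *
        ⨆ A ∈ microProd R (restr τ) N m δ,
          ENNReal.log ((Measure.pi fun _ : ι => γ N) (orbSet R τ A m δ)))
      Filter.atTop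

/-- A tracial `R₀`-state on `ℂ⟨x⟩`. -/
def IsTracialRState {r : ι → ℕ} (R₀ : ℝ) (τ : FAlg (gen r) →ₗ[ℂ] ℂ) : Prop :=
  IsHermState τ ∧ (∀ p q, τ (p * q) = τ (q * p)) ∧
  (∀ p, 0 ≤ (τ (fstar p * p)).re) ∧
  ∀ (i : ι) (j : Fin (r i)) (k : ℕ) (p : FAlg (gen r)),
    (τ (fstar p * FreeAlgebra.ι ℂ (⟨i, j⟩ : gen r) ^ (2 * k) * p)).re
      ≤ R₀ ^ (2 * k) * (τ (fstar p * p)).re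

/-- `τ` is the free product of its restrictions `τ_i`: alternating words in the
`τ`-centered subalgebras `ℂ⟨x_i⟩` have vanishing `τ`-value. -/
def IsFreeProduct {r : ι → ℕ} (τ : FAlg (gen r) →ₗ[ℂ] ℂ) : Prop :=
  ∀ (k : ℕ), 0 < k → ∀ (idx : Fin k → ι) (p : ∀ l, FAlg (Fin (r (idx l)))),
    (∀ l, τ (inclAlg r (idx l) (p l)) = 0) →
    (∀ (l : Fin k) (hl : (l : ℕ) + 1 < k), idx l ≠ idx ⟨(l : ℕ) + 1, hl⟩) →
    τ ((List.ofFn fun l => inclAlg r (idx l) (p l)).prod) = 0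

/-- The partition function `Z_N^{(h, Ξ(N))}` of the orbital Gibbs micro-ensemble. -/
def ZOrbN (γ : ∀ N, Measure (UN N)) {r : ι → ℕ} (h : FAlg (gen r)) {N : ℕ}
    (A : ∀ i, Fin (r i) → Mat N) : ℝ :=
  ∫ V : ι → UN N, gibbsWt h A V ∂(Measure.pi fun _ => γ N)

/-- The orbital Gibbs micro-ensemble `μ_N^{(h, Ξ(N))}`. -/
def muOrbN (γ : ∀ N, Measure (UN N)) {r : ι → ℕ} (h : FAlg (gen r)) {N : ℕ}
    (A : ∀ i, Fin (r i) → Mat N) : Measure (ι → UN N) :=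
  (Measure.pi fun _ => γ N).withDensity
    fun V => ENNReal.ofReal (gibbsWt h A V / ZOrbN γ h A)

/-! ### Lebesgue measure on self-adjoint matrices and one-variable quantities -/

/-- The parametrization of self-adjoint matrices by the diagonal entries and the real
and imaginary parts of the above-diagonal entries. -/
def matOfCoord (N : ℕ) (f : Fin N × Fin N → ℝ) : Mat N :=
  Matrix.of fun p q =>
    if p = q then (f (p, p) : ℂ)
    else if p < q then (f (p, q) : ℂ) + (f (q, p) : ℂ) * Complex.I
    else (f (q, p) : ℂ) - (f (p, q) : ℂ) * Complex.I

/-- The Lebesgue measure `Λ_N` on self-adjoint `N × N` matrices. -/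
def LambdaMat (N : ℕ) : Measure (Mat N) :=
  Measure.map (matOfCoord N) (volume : Measure (Fin N × Fin N → ℝ))

/-- The product Lebesgue measure `Λ_N^{⊗n}` on `n`-tuples of self-adjoint matrices. -/
def LambdaPow (n N : ℕ) : Measure (Fin n → Mat N) :=
  Measure.map (fun f i => matOfCoord N (f i))
    (volume : Measure (Fin n → Fin N × Fin N → ℝ))

/-- Evaluation of a polynomial in `n` single variables at an `n`-tuple of matrices. -/
def evalSingle {n : ℕ} {N : ℕ} (A : Fin n → Mat N) :
    FAlg (gen fun _ : Fin n => 1) →ₐ[ℂ] Mat N :=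
  evalA fun i (_ : Fin 1) => A i

/-- The set `((M_N(ℂ)^{sa})_R)^n`. -/
def ballR (n N : ℕ) (R : ℝ) : Set (Fin n → Mat N) :=
  {A | ∀ i, (A i).IsHermitian ∧ opNorm (A i) ≤ R}

/-- The partition function `Z_{R,N}^h`. -/
def ZR (n N : ℕ) (R : ℝ) (h : FAlg (gen fun _ : Fin n => 1)) : ℝ :=
  ∫ A in ballR n N R,
    Real.exp (-(N : ℝ) ^ 2 * (trN N (evalSingle A h)).re) ∂(LambdaPow n N)

/-- The free pressure `π_R(h)`. -/
def piR (n : ℕ) (R : ℝ) (h : FAlg (gen fun _ : Fin n => 1)) : EReal :=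
  Filter.limsup
    (fun N : ℕ => ((((N : ℝ) ^ 2)⁻¹ : ℝ) : EReal) * ((Real.log (ZR n N R h) : ℝ) : EReal)
      + ((((n : ℝ) / 2 * Real.log N) : ℝ) : EReal))
    Filter.atTop

/-- The Gibbs micro-ensemble `λ_{R,N}^h`. -/
def lambdaGibbs (n N : ℕ) (R : ℝ) (h : FAlg (gen fun _ : Fin n => 1)) :
    Measure (Fin n → Mat N) :=
  ((LambdaPow n N).restrict (ballR n N R)).withDensity
    fun A => ENNReal.ofReal
      (Real.exp (-(N : ℝ) ^ 2 * (trN N (evalSingle A h)).re) / ZR n N R h)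

/-- The microstate free entropy `χ_R` of a single-variable functional. -/
def chiR1 (R : ℝ) (τ : FAlg (Fin 1) →ₗ[ℂ] ℂ) : EReal :=
  ⨅ (m : ℕ) (δ : ℝ) (_ : 0 < δ),
    Filter.limsup
      (fun N : ℕ => ((((N : ℝ) ^ 2)⁻¹ : ℝ) : EReal) *
          ENNReal.log (LambdaMat N {B : Mat N | (fun _ : Fin 1 => B) ∈ microSet R τ N m δ})
        + ((((1 : ℝ) / 2 * Real.log N) : ℝ) : EReal))
      Filter.atTop

/-- The microstate free entropy `χ_R` of a functional on `n` single variables. -/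
def chiRn (n : ℕ) (R : ℝ) (σ : FAlg (gen fun _ : Fin n => 1) →ₗ[ℂ] ℂ) : EReal :=
  ⨅ (m : ℕ) (δ : ℝ) (_ : 0 < δ),
    Filter.limsup
      (fun N : ℕ => ((((N : ℝ) ^ 2)⁻¹ : ℝ) : EReal) *
          ENNReal.log (LambdaPow n N
            {A : Fin n → Mat N | (fun i (_ : Fin 1) => A i) ∈ microFull R σ N m δ})
        + ((((n : ℝ) / 2 * Real.log N) : ℝ) : EReal))
      Filter.atTop

/-- The `η`-entropy `η_R(τ)`, the minus Legendre transform of the free pressure. -/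
def etaR (n : ℕ) (R : ℝ) (τ : FAlg (gen fun _ : Fin n => 1) →ₗ[ℂ] ℂ) : EReal :=
  ⨅ (h : FAlg (gen fun _ : Fin n => 1)) (_ : IsSA h),
    (((τ h).re : ℝ) : EReal) + piR n R h

/-! ### The doubled (tensor) orbital free pressure -/

/-- The algebraic tensor product `ℂ⟨x⟩ ⊗ ℂ⟨x⟩`. -/
abbrev TAlg (r : ι → ℕ) := TensorProduct ℂ (FAlg (gen r)) (FAlg (gen r))

/-- The functional `τ ⊗ τ` on `ℂ⟨x⟩ ⊗ ℂ⟨x⟩`. -/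
def tensFun {r : ι → ℕ} (τ : FAlg (gen r) →ₗ[ℂ] ℂ) : TAlg r →ₗ[ℂ] ℂ :=
  (TensorProduct.lid ℂ ℂ).toLinearMap ∘ₗ TensorProduct.map τ τ

/-- The normalized trace as a linear map. -/
def trLin (N : ℕ) : Mat N →ₗ[ℂ] ℂ := (N : ℂ)⁻¹ • Matrix.traceLinearMap (Fin N) ℂ ℂ

/-- The functional `tr_N ⊗ tr_N` on `M_N(ℂ) ⊗ M_N(ℂ)`. -/
def tr2 (N : ℕ) : TensorProduct ℂ (Mat N) (Mat N) →ₗ[ℂ] ℂ :=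
  (TensorProduct.lid ℂ ℂ).toLinearMap ∘ₗ TensorProduct.map (trLin N) (trLin N)

/-- Evaluation of `ℂ⟨x⟩ ⊗ ℂ⟨x⟩` at a family of matrix tuples. -/
def evalT {r : ι → ℕ} {N : ℕ} (A : ∀ i, Fin (r i) → Mat N) :
    TAlg r →ₐ[ℂ] TensorProduct ℂ (Mat N) (Mat N) :=
  Algebra.TensorProduct.map (evalA A) (evalA A)

/-- The finite-`N` doubled orbital free pressure `π^{(2)}_{orb,R}(p : (τ_i); N, m, δ)`. -/
def pi2OrbN (γ : ∀ N, Measure (UN N)) (R : ℝ) {r : ι → ℕ} (p : TAlg r)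
    (τs : ∀ i, FAlg (Fin (r i)) →ₗ[ℂ] ℂ) (N m : ℕ) (δ : ℝ) : EReal :=
  ⨆ A ∈ microProd R τs N m δ,
    ((Real.log (∫ V : ι → UN N,
        Real.exp (-(N : ℝ) ^ 2 * (tr2 N (evalT (conjFam V A) p)).re)
        ∂(Measure.pi fun _ => γ N)) : ℝ) : EReal)

/-- The doubled orbital free pressure `π^{(2)}_{orb,R}(p : (τ_i))`. -/
def pi2Orb (γ : ∀ N, Measure (UN N)) (R : ℝ) {r : ι → ℕ} (p : TAlg r)
    (τs : ∀ i, FAlg (Fin (r i)) →ₗ[ℂ] ℂ) : EReal :=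
  ⨅ (m : ℕ) (δ : ℝ) (_ : 0 < δ),
    Filter.limsup
      (fun N : ℕ => ((((N : ℝ) ^ 2)⁻¹ : ℝ) : EReal) * pi2OrbN γ R p τs N m δ)
      Filter.atTop

/-! ### Auxiliary lemmas for Statement 4 -/

section Aux

instance matSecondCountable (N : ℕ) : SecondCountableTopology (Mat N) :=
  inferInstanceAs (SecondCountableTopology (Fin N → Fin N → ℂ))

instance unSecondCountable (N : ℕ) : SecondCountableTopology (UN N) :=
  TopologicalSpace.Subtype.secondCountableTopology ((unitary (Mat N) : Set (Mat N)))

lemma opNorm_nonneg {N : ℕ} (A : Mat N) : 0 ≤ opNorm A := norm_nonneg _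

lemma opNorm_mul_le {N : ℕ} (A B : Mat N) : opNorm (A * B) ≤ opNorm A * opNorm B := by
  unfold opNorm
  rw [map_mul]
  exact norm_mul_le _ _

lemma opNorm_add_le {N : ℕ} (A B : Mat N) : opNorm (A + B) ≤ opNorm A + opNorm B := by
  unfold opNorm
  rw [map_add]
  exact norm_add_le _ _

lemma opNorm_algebraMap_le {N : ℕ} (c : ℂ) :
    opNorm (algebraMap ℂ (Mat N) c) ≤ ‖c‖ := by
  unfold opNorm
  rw [Algebra.algebraMap_eq_smul_one, _root_.map_smul, map_one]
  calc ‖c • (1 : EuclideanSpace ℂ (Fin N) →L[ℂ] EuclideanSpace ℂ (Fin N))‖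
      ≤ ‖c‖ * ‖(1 : EuclideanSpace ℂ (Fin N) →L[ℂ] EuclideanSpace ℂ (Fin N))‖ :=
        ContinuousLinearMap.opNorm_smul_le _ _
    _ ≤ ‖c‖ * 1 := by
        gcongr
        rw [ContinuousLinearMap.one_def]
        exact ContinuousLinearMap.norm_id_le
    _ = ‖c‖ := mul_one _

lemma opNorm_unitary_le {N : ℕ} (U : UN N) : opNorm (U : Mat N) ≤ 1 := by
  unfold opNorm
  set T := Matrix.toEuclideanCLM (𝕜 := ℂ) (U : Mat N) with hT
  have h1 : star T * T = 1 := by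
    rw [hT, ← map_star, ← map_mul, Unitary.star_mul_self_of_mem U.2, map_one]
  have h2 : ‖star T * T‖ ≤ 1 := by
    rw [h1, ContinuousLinearMap.one_def]
    exact ContinuousLinearMap.norm_id_le
  nlinarith [CStarRing.norm_star_mul_self (x := T), norm_nonneg T]

lemma opNorm_conj_le {N : ℕ} (U : UN N) (A : Mat N) {R : ℝ} (hA : opNorm A ≤ R) (hR : 0 ≤ R) :
    opNorm ((U : Mat N) * A * star (U : Mat N)) ≤ R := by
  have h1 := opNorm_mul_le ((U : Mat N) * A) (star (U : Mat N))
  have h2 := opNorm_mul_le (U : Mat N) A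
  have h3 : opNorm (star (U : Mat N)) ≤ 1 := by
    have : star (U : Mat N) = ((star U : UN N) : Mat N) := rfl
    rw [this]
    exact opNorm_unitary_le _
  have h4 := opNorm_unitary_le U
  have h5 := opNorm_nonneg A
  have h6 := opNorm_nonneg ((U : Mat N) * A)
  have h7 := opNorm_nonneg (star (U : Mat N))
  nlinarith

lemma diag_abs_le {N : ℕ} (A : Mat N) (i : Fin N) : ‖A i i‖ ≤ opNorm A := by
  classical
  set T := Matrix.toEuclideanCLM (𝕜 := ℂ) A with hTdef
  set v : EuclideanSpace ℂ (Fin N) := EuclideanSpace.single i 1 with hv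
  have hTv : T v = (WithLp.toLp 2 (Matrix.toLin' A (Pi.single i 1))) := by
    exact Matrix.toEuclideanCLM_toLp A (Pi.single i 1)
  have key : (inner ℂ v (T v) : ℂ) = A i i := by
    rw [hv, EuclideanSpace.inner_single_left]
    simp only [map_one, one_mul]
    rw [← hv, hTv]
    have : Matrix.toLin' A (Pi.single i 1) = A.mulVec (Pi.single i 1) := by
      simp [Matrix.toLin'_apply]
    rw [this, Matrix.mulVec_single]
    simp
  have h1 : ‖(inner ℂ v (T v) : ℂ)‖ ≤ ‖v‖ * ‖T v‖ := by
    simpa using norm_inner_le_norm (𝕜 := ℂ) v (T v)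
  have h2 : ‖T v‖ ≤ ‖T‖ * ‖v‖ := T.le_opNorm v
  have h3 : ‖v‖ = 1 := by simp [hv]
  rw [key] at h1
  calc ‖A i i‖ ≤ ‖v‖ * ‖T v‖ := h1
    _ ≤ ‖v‖ * (‖T‖ * ‖v‖) := by gcongr
    _ = ‖T‖ := by rw [h3]; ring
    _ = opNorm A := rfl

lemma abs_trN_le {N : ℕ} (A : Mat N) : ‖trN N A‖ ≤ opNorm A := by
  rcases Nat.eq_zero_or_pos N with h | h
  · subst h
    have : A.trace = 0 := by simp [Matrix.trace]
    simp [trN, this, opNorm_nonneg A]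
  · have habs : ‖A.trace‖ ≤ (N : ℝ) * opNorm A := by
      calc ‖A.trace‖ = ‖(∑ i, A i i)‖ := by rfl
        _ ≤ ∑ i : Fin N, ‖A i i‖ := norm_sum_le _ _
        _ ≤ ∑ _i : Fin N, opNorm A := Finset.sum_le_sum fun i _ => diag_abs_le A i
        _ = (N : ℝ) * opNorm A := by simp [Finset.sum_const, mul_comm]
    have hN : (0 : ℝ) < (N : ℝ) := by exact_mod_cast h
    unfold trN
    rw [norm_div, Complex.norm_natCast]
    rw [div_le_iff₀ hN]
    calc ‖A.trace‖ ≤ (N : ℝ) * opNorm A := habs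
      _ = opNorm A * (N : ℝ) := mul_comm _ _

lemma re_trN_ge {N : ℕ} (A : Mat N) {C : ℝ} (h : opNorm A ≤ C) : -C ≤ (trN N A).re := by
  have h1 : |(trN N A).re| ≤ ‖trN N A‖ := Complex.abs_re_le_norm _
  have := (abs_trN_le A).trans h
  have := abs_le.1 (h1.trans this)
  linarith [this.1]

section
variable {ι : Type} [Fintype ι] {r : ι → ℕ}

lemma exists_eval_bound (R : ℝ) (hR : 0 ≤ R) (h : FAlg (gen r)) :
    ∃ C : ℝ, 0 ≤ C ∧ ∀ (N : ℕ) (A : ∀ i, Fin (r i) → Mat N),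
      (∀ i j, opNorm (A i j) ≤ R) → opNorm (evalA A h) ≤ C := by
  induction h using FreeAlgebra.induction with
  | grade0 c =>
      refine ⟨‖c‖, norm_nonneg c, fun N A _ => ?_⟩
      rw [show evalA A (algebraMap ℂ _ c) = algebraMap ℂ (Mat N) c from (evalA A).commutes c]
      exact opNorm_algebraMap_le c
  | grade1 x =>
      refine ⟨R, hR, fun N A hA => ?_⟩
      rw [show evalA A (FreeAlgebra.ι ℂ x) = A x.1 x.2 from FreeAlgebra.lift_ι_apply _ _]
      exact hA x.1 x.2
  | mul a b ha hb =>
      obtain ⟨C₁, hC₁, H₁⟩ := ha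
      obtain ⟨C₂, hC₂, H₂⟩ := hb
      refine ⟨C₁ * C₂, mul_nonneg hC₁ hC₂, fun N A hA => ?_⟩
      rw [map_mul]
      calc opNorm (evalA A a * evalA A b) ≤ opNorm (evalA A a) * opNorm (evalA A b) :=
            opNorm_mul_le _ _
        _ ≤ C₁ * C₂ := by
            have := H₁ N A hA; have := H₂ N A hA
            have := opNorm_nonneg (evalA A a); have := opNorm_nonneg (evalA A b)
            nlinarith
  | add a b ha hb =>
      obtain ⟨C₁, hC₁, H₁⟩ := ha
      obtain ⟨C₂, hC₂, H₂⟩ := hb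
      refine ⟨C₁ + C₂, by linarith, fun N A hA => ?_⟩
      rw [map_add]
      exact (opNorm_add_le _ _).trans (add_le_add (H₁ N A hA) (H₂ N A hA))

lemma evalA_inclSub {N : ℕ} (P : ι → Prop) (B : ∀ i, Fin (r i) → Mat N)
    (q : FAlg (gen fun i : Subtype P => r i.1)) :
    evalA B (inclSub P q) = evalA (fun i : Subtype P => B i.1) q := by
  have : (evalA B).comp (inclSub P) = evalA (fun i : Subtype P => B i.1) := by
    apply FreeAlgebra.hom_ext
    funext p
    simp [inclSub, evalA, FreeAlgebra.lift_ι_apply]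
  exact DFunLike.congr_fun this q

lemma continuous_evalA_conj {N : ℕ} (A : ∀ i, Fin (r i) → Mat N) (h : FAlg (gen r)) :
    Continuous fun V : ι → UN N => evalA (conjFam V A) h := by
  induction h using FreeAlgebra.induction with
  | grade0 c =>
      simp only [AlgHom.commutes]
      exact continuous_const
  | grade1 x =>
      have : (fun V : ι → UN N => evalA (conjFam V A) (FreeAlgebra.ι ℂ x)) =
          fun V : ι → UN N => ((V x.1 : Mat N) * A x.1 x.2 * star (V x.1 : Mat N)) := by
        funext V
        exact FreeAlgebra.lift_ι_apply _ _
      rw [this]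
      have hc : Continuous fun V : ι → UN N => (V x.1 : Mat N) :=
        continuous_subtype_val.comp (continuous_apply x.1)
      exact (hc.matrix_mul continuous_const).matrix_mul hc.matrix_conjTranspose
  | mul a b ha hb =>
      simp only [map_mul]
      exact ha.matrix_mul hb
  | add a b ha hb =>
      simp only [map_add]
      exact ha.add hb

lemma continuous_gibbsWt {N : ℕ} (h : FAlg (gen r)) (A : ∀ i, Fin (r i) → Mat N) :
    Continuous fun V : ι → UN N => gibbsWt h A V := by
  unfold gibbsWt
  apply Real.continuous_exp.comp
  apply Continuous.mul continuous_const
  apply Complex.continuous_re.comp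
  unfold trN
  apply Continuous.div_const
  have htr : Continuous fun M : Mat N => M.trace := by
    unfold Matrix.trace
    exact continuous_finset_sum _ fun i _ =>
      (continuous_apply (i : Fin N)).comp (continuous_apply i)
  exact htr.comp (continuous_evalA_conj A h)

variable (γ : ∀ N, Measure (UN N)) [∀ N, IsProbabilityMeasure (γ N)]

lemma gibbs_int_facts {R C : ℝ} (hR : 0 ≤ R) (hC : 0 ≤ C) (h : FAlg (gen r))
    (hb : ∀ (N : ℕ) (B : ∀ i, Fin (r i) → Mat N),
      (∀ i j, opNorm (B i j) ≤ R) → opNorm (evalA B h) ≤ C)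
    {N : ℕ} (A : ∀ i, Fin (r i) → Mat N) (hA : ∀ i j, opNorm (A i j) ≤ R) :
    0 < (∫ V : ι → UN N, gibbsWt h A V ∂(Measure.pi fun _ => γ N)) ∧
      (∫ V : ι → UN N, gibbsWt h A V ∂(Measure.pi fun _ => γ N)) ≤
        Real.exp ((N : ℝ) ^ 2 * C) := by
  have hbd : ∀ V : ι → UN N, gibbsWt h A V ≤ Real.exp ((N : ℝ) ^ 2 * C) := by
    intro V
    unfold gibbsWt
    apply Real.exp_le_exp.2
    have hconj : ∀ i j, opNorm (conjFam V A i j) ≤ R := fun i j =>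
      opNorm_conj_le (V i) (A i j) (hA i j) hR
    have := re_trN_ge (evalA (conjFam V A) h) (hb N (conjFam V A) hconj)
    have hN2 : (0 : ℝ) ≤ (N : ℝ) ^ 2 := sq_nonneg _
    nlinarith
  have hmeas := (continuous_gibbsWt h A).measurable
  have hint : Integrable (fun V : ι → UN N => gibbsWt h A V)
      (Measure.pi fun _ => γ N) := by
    refine Integrable.mono' (integrable_const (Real.exp ((N : ℝ) ^ 2 * C)))
      hmeas.aestronglyMeasurable (ae_of_all _ fun V => ?_)
    have hp : 0 < gibbsWt h A V := Real.exp_pos _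
    rw [Real.norm_eq_abs, abs_of_pos hp]
    exact hbd V
  have hpos : ∀ V : ι → UN N, 0 < gibbsWt h A V := fun V => Real.exp_pos _
  constructor
  · rw [MeasureTheory.integral_pos_iff_support_of_nonneg
        (f := fun V : ι → UN N => gibbsWt h A V) (fun V => (hpos V).le) hint]
    have : Function.support (fun V : ι → UN N => gibbsWt h A V) = Set.univ := by
      ext V; simp [Function.support, (hpos V).ne']
    rw [this]
    simp
  · calc (∫ V : ι → UN N, gibbsWt h A V ∂(Measure.pi fun _ => γ N))
        ≤ (∫ _V : ι → UN N, Real.exp ((N : ℝ) ^ 2 * C) ∂(Measure.pi fun _ => γ N)) :=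
          integral_mono hint (integrable_const _) hbd
      _ = Real.exp ((N : ℝ) ^ 2 * C) := by simp

end

section
variable {ι : Type} [Fintype ι] {r : ι → ℕ}
variable (γ : ∀ N, Measure (UN N)) [∀ N, IsProbabilityMeasure (γ N)]

lemma microSet_mono {κ : Type} (R : ℝ) (τ : FAlg κ →ₗ[ℂ] ℂ) (N : ℕ) {m m' : ℕ}
    (hm : m ≤ m') {δ δ' : ℝ} (hδ : δ' ≤ δ) :
    microSet R τ N m' δ' ⊆ microSet R τ N m δ := fun A hA =>
  ⟨hA.1, fun w hw hl => lt_of_lt_of_le (hA.2 w hw (hl.trans hm)) hδ⟩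

lemma piOrbN_mono (R : ℝ) (h : FAlg (gen r)) (τs : ∀ i, FAlg (Fin (r i)) →ₗ[ℂ] ℂ)
    (N : ℕ) {m m' : ℕ} (hm : m ≤ m') {δ δ' : ℝ} (hδ : δ' ≤ δ) :
    piOrbN γ R h τs N m' δ' ≤ piOrbN γ R h τs N m δ :=
  iSup₂_le fun A hA =>
    le_iSup₂ (f := fun A (_ : A ∈ microProd R τs N m δ) =>
        ((Real.log (∫ V : ι → UN N, gibbsWt h A V ∂(Measure.pi fun _ => γ N)) : ℝ) : EReal))
      A (fun i => microSet_mono R (τs i) N hm hδ (hA i))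

lemma piOrbN_le_bound {R C : ℝ} (hR : 0 ≤ R) (hC : 0 ≤ C) (h : FAlg (gen r))
    (hb : ∀ (N : ℕ) (B : ∀ i, Fin (r i) → Mat N),
      (∀ i j, opNorm (B i j) ≤ R) → opNorm (evalA B h) ≤ C)
    (τs : ∀ i, FAlg (Fin (r i)) →ₗ[ℂ] ℂ) (N m : ℕ) (δ : ℝ) :
    piOrbN γ R h τs N m δ ≤ (((N : ℝ) ^ 2 * C : ℝ) : EReal) := by
  refine iSup₂_le fun A hA => ?_
  have hA' : ∀ i j, opNorm (A i j) ≤ R := fun i j => ((hA i).1 j).2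
  obtain ⟨hpos, hle⟩ := gibbs_int_facts γ hR hC h hb A hA'
  have hlog : Real.log (∫ V : ι → UN N, gibbsWt h A V ∂(Measure.pi fun _ => γ N))
      ≤ (N : ℝ) ^ 2 * C := by
    calc Real.log (∫ V : ι → UN N, gibbsWt h A V ∂(Measure.pi fun _ => γ N))
        ≤ Real.log (Real.exp ((N : ℝ) ^ 2 * C)) := Real.log_le_log hpos hle
      _ = (N : ℝ) ^ 2 * C := Real.log_exp _
  exact_mod_cast EReal.coe_le_coe_iff.2 hlog

end

lemma ereal_mul_add_le {c : ℝ} (hc : 0 ≤ c) {a b : EReal} (ha : a ≠ ⊤) (hb : b ≠ ⊤) :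
    (c : EReal) * (a + b) ≤ (c : EReal) * a + (c : EReal) * b := by
  rcases hc.eq_or_lt with heq | hpos
  · rw [← heq]
    simp
  induction a with
  | bot =>
      rw [EReal.bot_add, EReal.coe_mul_bot_of_pos hpos]
      exact bot_le
  | top => exact absurd rfl ha
  | coe x =>
      induction b with
      | bot =>
          rw [EReal.add_bot, EReal.coe_mul_bot_of_pos hpos]
          exact bot_le
      | top => exact absurd rfl hb
      | coe y =>
          rw [← EReal.coe_add, ← EReal.coe_mul, ← EReal.coe_mul, ← EReal.coe_mul,
            ← EReal.coe_add]
          exact EReal.coe_le_coe_iff.2 (le_of_eq (mul_add c x y))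

section Split
variable {n : ℕ} {r : Fin n → ℕ} (P Q : Fin n → Prop) [DecidablePred P] [DecidablePred Q]
variable (γ : ∀ N, Measure (UN N)) [∀ N, IsProbabilityMeasure (γ N)]

lemma gibbs_pointwise_split {N : ℕ} (h₁ : FAlg (gen fun i : Subtype P => r i.1))
    (h₂ : FAlg (gen fun i : Subtype Q => r i.1)) (A : ∀ i : Fin n, Fin (r i) → Mat N)
    (V : Fin n → UN N) :
    gibbsWt (inclSub P h₁ + inclSub Q h₂) A V =
      gibbsWt h₁ (fun i : Subtype P => A i.1) (fun i : Subtype P => V i.1) *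
      gibbsWt h₂ (fun i : Subtype Q => A i.1) (fun i : Subtype Q => V i.1) := by
  unfold gibbsWt
  rw [← Real.exp_add]
  congr 1
  have e1 : evalA (conjFam V A) (inclSub P h₁) =
      evalA (conjFam (fun i : Subtype P => V i.1) (fun i : Subtype P => A i.1)) h₁ :=
    evalA_inclSub P (conjFam V A) h₁
  have e2 : evalA (conjFam V A) (inclSub Q h₂) =
      evalA (conjFam (fun i : Subtype Q => V i.1) (fun i : Subtype Q => A i.1)) h₂ :=
    evalA_inclSub Q (conjFam V A) h₂
  rw [map_add, e1, e2]
  have tradd : ∀ X Y : Mat N, trN N (X + Y) = trN N X + trN N Y := by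
    intro X Y
    unfold trN
    rw [Matrix.trace_add, add_div]
  rw [tradd, Complex.add_re]
  ring

set_option maxHeartbeats 2000000 in
lemma gibbs_int_split (hPQ : ∀ i, ¬ P i ↔ Q i) {N : ℕ}
    (h₁ : FAlg (gen fun i : Subtype P => r i.1))
    (h₂ : FAlg (gen fun i : Subtype Q => r i.1)) (A : ∀ i : Fin n, Fin (r i) → Mat N) :
    (∫ V : Fin n → UN N, gibbsWt (inclSub P h₁ + inclSub Q h₂) A V
        ∂(Measure.pi fun _ => γ N)) =
      (∫ W : Subtype P → UN N, gibbsWt h₁ (fun i : Subtype P => A i.1) W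
        ∂(Measure.pi fun _ => γ N)) *
      (∫ W : Subtype Q → UN N, gibbsWt h₂ (fun i : Subtype Q => A i.1) W
        ∂(Measure.pi fun _ => γ N)) := by
  classical
  set e2 : {i : Fin n // ¬ P i} ≃ Subtype Q := Equiv.subtypeEquivRight hPQ with he2
  set e := MeasurableEquiv.piEquivPiSubtypeProd (fun _ : Fin n => UN N) P with he
  have hcomp : ∀ V : Fin n → UN N,
      gibbsWt (inclSub P h₁ + inclSub Q h₂) A V =
        gibbsWt h₁ (fun i : Subtype P => A i.1) (e V).1 *
        gibbsWt h₂ (fun i : Subtype Q => A i.1) (fun i : Subtype Q => (e V).2 (e2.symm i)) := by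
    intro V
    rw [gibbs_pointwise_split P Q h₁ h₂ A V]
    have h1 : (e V).1 = fun i : Subtype P => V i.1 := rfl
    have h2 : (fun i : Subtype Q => (e V).2 (e2.symm i)) = fun i : Subtype Q => V i.1 := by
      funext i
      show V ((e2.symm i : {i : Fin n // ¬ P i}) : Fin n) = V i.1
      rw [he2, Equiv.subtypeEquivRight_symm_apply]
    rw [h1, h2]
  have mp := measurePreserving_piEquivPiSubtypeProd (fun _ : Fin n => γ N) P
  have mp2 := measurePreserving_piCongrLeft (fun _ : Subtype Q => γ N) e2
  have harg : ∀ w : {i : Fin n // ¬ P i} → UN N,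
      (MeasurableEquiv.piCongrLeft (fun _ : Subtype Q => UN N) e2) w =
        fun i : Subtype Q => w (e2.symm i) := by
    intro w
    funext i
    rw [MeasurableEquiv.coe_piCongrLeft]
    conv_lhs => rw [show i = e2 (e2.symm i) by simp]
    rw [Equiv.piCongrLeft_apply_apply]
  calc (∫ V : Fin n → UN N, gibbsWt (inclSub P h₁ + inclSub Q h₂) A V
        ∂(Measure.pi fun _ => γ N))
      = ∫ V : Fin n → UN N, (fun z : (Subtype P → UN N) × ({i : Fin n // ¬ P i} → UN N) =>
          gibbsWt h₁ (fun i : Subtype P => A i.1) z.1 *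
          gibbsWt h₂ (fun i : Subtype Q => A i.1) (fun i : Subtype Q => z.2 (e2.symm i))) (e V)
          ∂(Measure.pi fun _ : Fin n => γ N) := by
        congr 1
        funext V
        exact hcomp V
    _ = ∫ z : (Subtype P → UN N) × ({i : Fin n // ¬ P i} → UN N),
          gibbsWt h₁ (fun i : Subtype P => A i.1) z.1 *
          gibbsWt h₂ (fun i : Subtype Q => A i.1) (fun i : Subtype Q => z.2 (e2.symm i))
          ∂((Measure.pi fun _ : Subtype P => γ N).prod
            (Measure.pi fun _ : {i : Fin n // ¬ P i} => γ N)) :=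
        mp.integral_comp'
          (fun z : (Subtype P → UN N) × ({i : Fin n // ¬ P i} → UN N) =>
            gibbsWt h₁ (fun i : Subtype P => A i.1) z.1 *
            gibbsWt h₂ (fun i : Subtype Q => A i.1) (fun i : Subtype Q => z.2 (e2.symm i)))
    _ = (∫ W : Subtype P → UN N, gibbsWt h₁ (fun i : Subtype P => A i.1) W
          ∂(Measure.pi fun _ => γ N)) *
        (∫ w : {i : Fin n // ¬ P i} → UN N,
          gibbsWt h₂ (fun i : Subtype Q => A i.1) (fun i : Subtype Q => w (e2.symm i))
          ∂(Measure.pi fun _ => γ N)) :=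
        MeasureTheory.integral_prod_mul
          (fun W : Subtype P → UN N => gibbsWt h₁ (fun i : Subtype P => A i.1) W)
          (fun w : {i : Fin n // ¬ P i} → UN N =>
            gibbsWt h₂ (fun i : Subtype Q => A i.1) (fun i : Subtype Q => w (e2.symm i)))
    _ = (∫ W : Subtype P → UN N, gibbsWt h₁ (fun i : Subtype P => A i.1) W
          ∂(Measure.pi fun _ => γ N)) *
        (∫ W : Subtype Q → UN N, gibbsWt h₂ (fun i : Subtype Q => A i.1) W
          ∂(Measure.pi fun _ => γ N)) := by
        congr 1
        rw [show (fun w : {i : Fin n // ¬ P i} → UN N =>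
            gibbsWt h₂ (fun i : Subtype Q => A i.1) (fun i : Subtype Q => w (e2.symm i))) =
          (fun w : {i : Fin n // ¬ P i} → UN N => gibbsWt h₂ (fun i : Subtype Q => A i.1)
            ((MeasurableEquiv.piCongrLeft (fun _ : Subtype Q => UN N) e2) w)) from
          funext fun w => by rw [harg w]]
        exact mp2.integral_comp' _

lemma piOrbN_split (hPQ : ∀ i, ¬ P i ↔ Q i) {R : ℝ} (hR : 0 ≤ R)
    (h₁ : FAlg (gen fun i : Subtype P => r i.1))
    (h₂ : FAlg (gen fun i : Subtype Q => r i.1))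
    (τs : ∀ i : Fin n, FAlg (Fin (r i)) →ₗ[ℂ] ℂ) (N m : ℕ) (δ : ℝ) :
    piOrbN γ R (inclSub P h₁ + inclSub Q h₂) τs N m δ ≤
      piOrbN γ R h₁ (fun i : Subtype P => τs i.1) N m δ +
      piOrbN γ R h₂ (fun i : Subtype Q => τs i.1) N m δ := by
  obtain ⟨C₁, hC₁, hb₁⟩ := exists_eval_bound R hR h₁
  obtain ⟨C₂, hC₂, hb₂⟩ := exists_eval_bound R hR h₂
  refine iSup₂_le fun A hA => ?_
  have hA1 : (fun i : Subtype P => A i.1) ∈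
      microProd R (fun i : Subtype P => τs i.1) N m δ := fun i => hA i.1
  have hA2 : (fun i : Subtype Q => A i.1) ∈
      microProd R (fun i : Subtype Q => τs i.1) N m δ := fun i => hA i.1
  obtain ⟨hpos1, _⟩ := gibbs_int_facts γ hR hC₁ h₁ hb₁ (fun i : Subtype P => A i.1)
    (fun i j => ((hA i.1).1 j).2)
  obtain ⟨hpos2, _⟩ := gibbs_int_facts γ hR hC₂ h₂ hb₂ (fun i : Subtype Q => A i.1)
    (fun i j => ((hA i.1).1 j).2)
  have key := gibbs_int_split P Q γ hPQ h₁ h₂ A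
  calc ((Real.log (∫ V : Fin n → UN N, gibbsWt (inclSub P h₁ + inclSub Q h₂) A V
        ∂(Measure.pi fun _ => γ N)) : ℝ) : EReal)
      = ((Real.log (∫ W : Subtype P → UN N, gibbsWt h₁ (fun i : Subtype P => A i.1) W
          ∂(Measure.pi fun _ => γ N)) +
        Real.log (∫ W : Subtype Q → UN N, gibbsWt h₂ (fun i : Subtype Q => A i.1) W
          ∂(Measure.pi fun _ => γ N)) : ℝ) : EReal) := by
        rw [key, Real.log_mul hpos1.ne' hpos2.ne']
    _ = ((Real.log (∫ W : Subtype P → UN N, gibbsWt h₁ (fun i : Subtype P => A i.1) W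
          ∂(Measure.pi fun _ => γ N)) : ℝ) : EReal) +
        ((Real.log (∫ W : Subtype Q → UN N, gibbsWt h₂ (fun i : Subtype Q => A i.1) W
          ∂(Measure.pi fun _ => γ N)) : ℝ) : EReal) := EReal.coe_add _ _
    _ ≤ _ := by
        refine add_le_add ?_ ?_
        · exact le_iSup₂ (f := fun B (_ : B ∈ microProd R (fun i : Subtype P => τs i.1) N m δ) =>
            ((Real.log (∫ W : Subtype P → UN N, gibbsWt h₁ B W
              ∂(Measure.pi fun _ => γ N)) : ℝ) : EReal)) _ hA1
        · exact le_iSup₂ (f := fun B (_ : B ∈ microProd R (fun i : Subtype Q => τs i.1) N m δ) =>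
            ((Real.log (∫ W : Subtype Q → UN N, gibbsWt h₂ B W
              ∂(Measure.pi fun _ => γ N)) : ℝ) : EReal)) _ hA2

end Split

end Aux

/-- Proposition 2.2 (5): subadditivity of the orbital free pressure
with respect to splitting the variables into two sub-systems. -/
theorem statement4 {n : ℕ} (hn : 1 ≤ n) (r : Fin n → ℕ) (hr : ∀ i, 1 ≤ r i) (R : ℝ) (hR : 0 < R)
    (γ : ∀ N, Measure (UN N)) [∀ N, IsProbabilityMeasure (γ N)]
    (hγ : ∀ N, (γ N).IsMulLeftInvariant)
    (τs : ∀ i, FAlg (Fin (r i)) →ₗ[ℂ] ℂ) (hτs : ∀ i, IsHermState (τs i))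
    (n' : ℕ) (hn'1 : 1 ≤ n') (hn' : n' < n)
    (h₁ : FAlg (gen fun i : {i : Fin n // (i : ℕ) < n'} => r i.1))
    (h₂ : FAlg (gen fun i : {i : Fin n // n' ≤ (i : ℕ)} => r i.1))
    (hh₁ : IsSA h₁) (hh₂ : IsSA h₂) :
    piOrb γ R (inclSub (fun i : Fin n => (i : ℕ) < n') h₁ +
        inclSub (fun i : Fin n => n' ≤ (i : ℕ)) h₂) τs ≤
      piOrb γ R h₁ (fun i : {i : Fin n // (i : ℕ) < n'} => τs i.1) +
        piOrb γ R h₂ (fun i : {i : Fin n // n' ≤ (i : ℕ)} => τs i.1) := by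
  classical
  obtain ⟨C₁, hC₁, hb₁⟩ := exists_eval_bound R hR.le h₁
  obtain ⟨C₂, hC₂, hb₂⟩ := exists_eval_bound R hR.le h₂
  set τs₁ : ∀ i : {i : Fin n // (i : ℕ) < n'}, FAlg (Fin (r i.1)) →ₗ[ℂ] ℂ :=
    fun i => τs i.1 with hτs₁
  set τs₂ : ∀ i : {i : Fin n // n' ≤ (i : ℕ)}, FAlg (Fin (r i.1)) →ₗ[ℂ] ℂ :=
    fun i => τs i.1 with hτs₂
  have bd₁ : ∀ (N m : ℕ) (δ : ℝ),
      piOrbN γ R h₁ τs₁ N m δ ≤ (((N : ℝ) ^ 2 * C₁ : ℝ) : EReal) := fun N m δ =>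
    piOrbN_le_bound γ hR.le hC₁ h₁ hb₁ τs₁ N m δ
  have bd₂ : ∀ (N m : ℕ) (δ : ℝ),
      piOrbN γ R h₂ τs₂ N m δ ≤ (((N : ℝ) ^ 2 * C₂ : ℝ) : EReal) := fun N m δ =>
    piOrbN_le_bound γ hR.le hC₂ h₂ hb₂ τs₂ N m δ
  have hc : ∀ N : ℕ, (0 : ℝ) ≤ (((N : ℝ) ^ 2)⁻¹ : ℝ) := fun N => by positivity
  have sc : ∀ (C : ℝ), 0 ≤ C → ∀ (x : EReal) (N : ℕ), x ≤ (((N : ℝ) ^ 2 * C : ℝ) : EReal) →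
      ((((N : ℝ) ^ 2)⁻¹ : ℝ) : EReal) * x ≤ (C : EReal) := by
    intro C hC x N hx
    rcases Nat.eq_zero_or_pos N with h0 | hN
    · subst h0
      simp only [Nat.cast_zero]
      rw [show (((0 : ℝ) ^ 2)⁻¹ : ℝ) = (0 : ℝ) by norm_num, EReal.coe_zero, zero_mul]
      exact_mod_cast EReal.coe_le_coe_iff.2 hC
    · have hN2 : ((N : ℝ) ^ 2) ≠ 0 := by positivity
      calc ((((N : ℝ) ^ 2)⁻¹ : ℝ) : EReal) * x
          ≤ ((((N : ℝ) ^ 2)⁻¹ : ℝ) : EReal) * (((N : ℝ) ^ 2 * C : ℝ) : EReal) :=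
            mul_le_mul_of_nonneg_left hx (by exact_mod_cast hc N)
        _ = (((((N : ℝ) ^ 2)⁻¹ * ((N : ℝ) ^ 2 * C)) : ℝ) : EReal) := by
            norm_cast
        _ = (C : EReal) := by
            congr 1
            field_simp
  have L1bd : ∀ (m : ℕ) (δ : ℝ),
      Filter.limsup (fun N : ℕ => ((((N : ℝ) ^ 2)⁻¹ : ℝ) : EReal) *
        piOrbN γ R h₁ τs₁ N m δ) Filter.atTop ≤ (C₁ : EReal) := by
    intro m δ
    refine Filter.limsup_le_of_le ?_ (Filter.Eventually.of_forall fun N =>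
      sc C₁ hC₁ _ N (bd₁ N m δ))
    isBoundedDefault
  have L2bd : ∀ (m : ℕ) (δ : ℝ),
      Filter.limsup (fun N : ℕ => ((((N : ℝ) ^ 2)⁻¹ : ℝ) : EReal) *
        piOrbN γ R h₂ τs₂ N m δ) Filter.atTop ≤ (C₂ : EReal) := by
    intro m δ
    refine Filter.limsup_le_of_le ?_ (Filter.Eventually.of_forall fun N =>
      sc C₂ hC₂ _ N (bd₂ N m δ))
    isBoundedDefault
  have hP1top : piOrb γ R h₁ τs₁ ≠ ⊤ := by
    have h1 : piOrb γ R h₁ τs₁ ≤ (C₁ : EReal) :=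
      le_trans (iInf_le_of_le 0 (iInf_le_of_le 1 (iInf_le _ one_pos))) (L1bd 0 1)
    exact ne_top_of_le_ne_top (EReal.coe_ne_top C₁) h1
  have hP2top : piOrb γ R h₂ τs₂ ≠ ⊤ := by
    have h1 : piOrb γ R h₂ τs₂ ≤ (C₂ : EReal) :=
      le_trans (iInf_le_of_le 0 (iInf_le_of_le 1 (iInf_le _ one_pos))) (L2bd 0 1)
    exact ne_top_of_le_ne_top (EReal.coe_ne_top C₂) h1
  have core : ∀ (m₁ : ℕ) (δ₁ : ℝ) (m₂ : ℕ) (δ₂ : ℝ), 0 < δ₁ → 0 < δ₂ →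
      piOrb γ R (inclSub (fun i : Fin n => (i : ℕ) < n') h₁ +
        inclSub (fun i : Fin n => n' ≤ (i : ℕ)) h₂) τs ≤
      Filter.limsup (fun N : ℕ => ((((N : ℝ) ^ 2)⁻¹ : ℝ) : EReal) *
        piOrbN γ R h₁ τs₁ N m₁ δ₁) Filter.atTop +
      Filter.limsup (fun N : ℕ => ((((N : ℝ) ^ 2)⁻¹ : ℝ) : EReal) *
        piOrbN γ R h₂ τs₂ N m₂ δ₂) Filter.atTop := by
    intro m₁ δ₁ m₂ δ₂ hδ₁ hδ₂
    set u : ℕ → EReal := fun N => ((((N : ℝ) ^ 2)⁻¹ : ℝ) : EReal) *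
      piOrbN γ R h₁ τs₁ N m₁ δ₁ with hu
    set v : ℕ → EReal := fun N => ((((N : ℝ) ^ 2)⁻¹ : ℝ) : EReal) *
      piOrbN γ R h₂ τs₂ N m₂ δ₂ with hv
    have hδ : 0 < min δ₁ δ₂ := lt_min hδ₁ hδ₂
    have step1 : piOrb γ R (inclSub (fun i : Fin n => (i : ℕ) < n') h₁ +
        inclSub (fun i : Fin n => n' ≤ (i : ℕ)) h₂) τs ≤
        Filter.limsup (fun N : ℕ => ((((N : ℝ) ^ 2)⁻¹ : ℝ) : EReal) *
          piOrbN γ R (inclSub (fun i : Fin n => (i : ℕ) < n') h₁ +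
            inclSub (fun i : Fin n => n' ≤ (i : ℕ)) h₂) τs N (max m₁ m₂) (min δ₁ δ₂))
          Filter.atTop :=
      iInf_le_of_le (max m₁ m₂) (iInf_le_of_le (min δ₁ δ₂) (iInf_le _ hδ))
    have ptw : ∀ N : ℕ, ((((N : ℝ) ^ 2)⁻¹ : ℝ) : EReal) *
        piOrbN γ R (inclSub (fun i : Fin n => (i : ℕ) < n') h₁ +
          inclSub (fun i : Fin n => n' ≤ (i : ℕ)) h₂) τs N (max m₁ m₂) (min δ₁ δ₂) ≤
        u N + v N := by
      intro N
      have hsplit := piOrbN_split (fun i : Fin n => (i : ℕ) < n')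
        (fun i : Fin n => n' ≤ (i : ℕ)) γ (fun i => not_lt) hR.le h₁ h₂ τs N
        (max m₁ m₂) (min δ₁ δ₂)
      have hmono1 : piOrbN γ R h₁ τs₁ N (max m₁ m₂) (min δ₁ δ₂) ≤
          piOrbN γ R h₁ τs₁ N m₁ δ₁ :=
        piOrbN_mono γ R h₁ τs₁ N (le_max_left _ _) (min_le_left _ _)
      have hmono2 : piOrbN γ R h₂ τs₂ N (max m₁ m₂) (min δ₁ δ₂) ≤
          piOrbN γ R h₂ τs₂ N m₂ δ₂ :=
        piOrbN_mono γ R h₂ τs₂ N (le_max_right _ _) (min_le_right _ _)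
      have h1 := hsplit.trans (add_le_add hmono1 hmono2)
      calc ((((N : ℝ) ^ 2)⁻¹ : ℝ) : EReal) *
          piOrbN γ R (inclSub (fun i : Fin n => (i : ℕ) < n') h₁ +
            inclSub (fun i : Fin n => n' ≤ (i : ℕ)) h₂) τs N (max m₁ m₂) (min δ₁ δ₂)
          ≤ ((((N : ℝ) ^ 2)⁻¹ : ℝ) : EReal) *
            (piOrbN γ R h₁ τs₁ N m₁ δ₁ + piOrbN γ R h₂ τs₂ N m₂ δ₂) :=
            mul_le_mul_of_nonneg_left h1 (by exact_mod_cast hc N)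
        _ ≤ u N + v N :=
            ereal_mul_add_le (hc N)
              (ne_top_of_le_ne_top (EReal.coe_ne_top _) (bd₁ N m₁ δ₁))
              (ne_top_of_le_ne_top (EReal.coe_ne_top _) (bd₂ N m₂ δ₂))
    have hlim : Filter.limsup (fun N : ℕ => ((((N : ℝ) ^ 2)⁻¹ : ℝ) : EReal) *
        piOrbN γ R (inclSub (fun i : Fin n => (i : ℕ) < n') h₁ +
          inclSub (fun i : Fin n => n' ≤ (i : ℕ)) h₂) τs N (max m₁ m₂) (min δ₁ δ₂))
        Filter.atTop ≤ Filter.limsup (u + v) Filter.atTop := by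
      refine Filter.limsup_le_limsup (Filter.Eventually.of_forall fun N => ?_) ?_ ?_
      · exact ptw N
      · isBoundedDefault
      · isBoundedDefault
    have hadd : Filter.limsup (u + v) Filter.atTop ≤
        Filter.limsup u Filter.atTop + Filter.limsup v Filter.atTop :=
      EReal.limsup_add_le
        (Or.inr (ne_top_of_le_ne_top (EReal.coe_ne_top C₂) (L2bd m₂ δ₂)))
        (Or.inl (ne_top_of_le_ne_top (EReal.coe_ne_top C₁) (L1bd m₁ δ₁)))
    exact step1.trans (hlim.trans hadd)
  refine EReal.le_add_of_forall_gt (Or.inr hP2top) (Or.inl hP1top) fun a' ha' b' hb' => ?_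
  obtain ⟨m₁, hm₁⟩ := iInf_lt_iff.1 ha'
  obtain ⟨δ₁, hd₁⟩ := iInf_lt_iff.1 hm₁
  obtain ⟨hδ₁, hL₁⟩ := iInf_lt_iff.1 hd₁
  obtain ⟨m₂, hm₂⟩ := iInf_lt_iff.1 hb'
  obtain ⟨δ₂, hd₂⟩ := iInf_lt_iff.1 hm₂
  obtain ⟨hδ₂, hL₂⟩ := iInf_lt_iff.1 hd₂
  exact (core m₁ δ₁ m₂ δ₂ hδ₁ hδ₂).trans (add_le_add hL₁.le hL₂.le)

end OrbFP

end
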